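/- arXiv:0710.3872 — 4 statements merged into one kernel-verified Lean document; each statement's English description precedes it below -/
import Mathlib

section
/- Let B be a metabelian Lie algebra over a field k satisfying axiom Φ2. Then every nilpotent Lie subalgebra of B is abelian; in particular the Fitting radical Fit(B) is abelian, i.e. any two elements of B each of whose generated Lie ideal is nilpotent commute. -/
open LieAlgebra

universe u v w

/-- A Lie ring is metabelian if it satisfies the identity `⁅⁅x₁,x₂⁆,⁅x₃,x₄⁆⁆ = 0`. -/
def IsMetabelian (L : Type v) [LieRing L] : Prop :=
  ∀ a b c d : L, ⁅⁅a, b⁆, ⁅c, d⁆⁆ = 0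

variable (k : Type u) [Field k]

namespace LieMeta

/-- The canonical projection onto the quotient by a Lie ideal, as a Lie algebra morphism. -/
def mkHom {L : Type v} [LieRing L] [LieAlgebra k L] (I : LieIdeal k L) : L →ₗ⁅k⁆ L ⧸ I :=
  { I.toSubmodule.mkQ with
    map_lie' := fun {_ _} => rfl }

variable {k}

/-- Lift of a Lie algebra morphism through a quotient by an ideal inside its kernel. -/
def qlift {L : Type v} {B : Type w} [LieRing L] [LieAlgebra k L] [LieRing B] [LieAlgebra k B]
    (I : LieIdeal k L) (f : L →ₗ⁅k⁆ B) (h : I ≤ f.ker) : (L ⧸ I) →ₗ⁅k⁆ B :=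
  { Submodule.liftQ I.toSubmodule (f : L →ₗ[k] B)
      (fun x hx => by simpa using (LieHom.mem_ker).mp (h hx)) with
    map_lie' := by
      rintro ⟨x⟩ ⟨y⟩
      exact f.map_lie x y }

@[simp]
theorem qlift_mk {L : Type v} {B : Type w} [LieRing L] [LieAlgebra k L] [LieRing B]
    [LieAlgebra k B] (I : LieIdeal k L) (f : L →ₗ⁅k⁆ B) (h : I ≤ f.ker) (x : L) :
    qlift I f h (mkHom k I x) = f x := rfl

/-- In a metabelian Lie algebra the second derived ideal vanishes. -/
theorem derivedSeries_two_eq_bot_of_isMetabelian {B : Type w} [LieRing B] [LieAlgebra k B]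
    (hB : IsMetabelian B) : derivedSeries k B 2 = ⊥ := by
  have hD1 : ∀ x ∈ derivedSeries k B 1, ∀ m ∈ derivedSeries k B 1, ⁅x, m⁆ = (0 : B) := by
    have hspan : (↑(derivedSeries k B 1) : Submodule k B) =
        Submodule.span k {m | ∃ x ∈ (⊤ : LieIdeal k B), ∃ n ∈ (⊤ : LieIdeal k B), ⁅x, n⁆ = m} := by
      rw [show derivedSeries k B 1 = ⁅(⊤ : LieIdeal k B), (⊤ : LieIdeal k B)⁆ by
        rw [derivedSeries_def, derivedSeriesOfIdeal_succ, derivedSeriesOfIdeal_zero]]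
      exact LieSubmodule.lieIdeal_oper_eq_linear_span' ..
    intro x hx
    have hx' : x ∈ Submodule.span k
        {m | ∃ x ∈ (⊤ : LieIdeal k B), ∃ n ∈ (⊤ : LieIdeal k B), ⁅x, n⁆ = m} := by
      rw [← hspan]; exact hx
    clear hx
    induction hx' using Submodule.span_induction with
    | mem z hz =>
      obtain ⟨a, -, b, -, rfl⟩ := hz
      intro m hm
      have hm' : m ∈ Submodule.span k
          {m | ∃ x ∈ (⊤ : LieIdeal k B), ∃ n ∈ (⊤ : LieIdeal k B), ⁅x, n⁆ = m} := by
        rw [← hspan]; exact hm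
      clear hm
      induction hm' using Submodule.span_induction with
      | mem w hw => obtain ⟨c, -, d, -, rfl⟩ := hw; exact hB a b c d
      | zero => exact lie_zero _
      | add u v _ _ hu hv => rw [lie_add, hu, hv, add_zero]
      | smul t u _ hu => rw [lie_smul, hu, smul_zero]
    | zero => intro m _; exact zero_lie m
    | add u v _ _ hu hv =>
      intro m hm; rw [add_lie, hu m hm, hv m hm, add_zero]
    | smul t u _ hu => intro m hm; rw [smul_lie, hu m hm, smul_zero]
  rw [eq_bot_iff, show derivedSeries k B 2 = ⁅derivedSeries k B 1, derivedSeries k B 1⁆ by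
    rw [derivedSeries_def, derivedSeriesOfIdeal_succ]]
  rw [LieSubmodule.lie_le_iff]
  intro x hx m hm
  rw [LieSubmodule.mem_bot]
  exact hD1 x hx m hm

end LieMeta

/-- The free metabelian Lie algebra over `k` on a set `X` of generators: the quotient of the
free Lie algebra by its second derived ideal. -/
abbrev FreeMetabelian (X : Type v) : Type _ :=
  FreeLieAlgebra k X ⧸ derivedSeries k (FreeLieAlgebra k X) 2

namespace FreeMetabelian

/-- The canonical (free) generators of the free metabelian Lie algebra. -/
noncomputable def of (X : Type v) (x : X) : FreeMetabelian k X :=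
  LieMeta.mkHom k (derivedSeries k (FreeLieAlgebra k X) 2) (FreeLieAlgebra.of k x)

theorem isMetabelian (X : Type v) : IsMetabelian (FreeMetabelian k X) := by
  rintro ⟨a⟩ ⟨b⟩ ⟨c⟩ ⟨d⟩
  show LieMeta.mkHom k (derivedSeries k (FreeLieAlgebra k X) 2) ⁅⁅a, b⁆, ⁅c, d⁆⁆ = 0
  have h1 : ∀ x y : FreeLieAlgebra k X, ⁅x, y⁆ ∈ derivedSeries k (FreeLieAlgebra k X) 1 := by
    intro x y
    rw [show derivedSeries k (FreeLieAlgebra k X) 1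
        = ⁅(⊤ : LieIdeal k (FreeLieAlgebra k X)), (⊤ : LieIdeal k (FreeLieAlgebra k X))⁆ by
      rw [derivedSeries_def, derivedSeriesOfIdeal_succ, derivedSeriesOfIdeal_zero]]
    exact LieSubmodule.lie_mem_lie trivial trivial
  have h2 : ⁅⁅a, b⁆, ⁅c, d⁆⁆ ∈ derivedSeries k (FreeLieAlgebra k X) 2 := by
    rw [show derivedSeries k (FreeLieAlgebra k X) 2
        = ⁅derivedSeries k (FreeLieAlgebra k X) 1, derivedSeries k (FreeLieAlgebra k X) 1⁆ by
      rw [derivedSeries_def, derivedSeriesOfIdeal_succ]]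
    exact LieSubmodule.lie_mem_lie (h1 a b) (h1 c d)
  exact (LieSubmodule.Quotient.mk_eq_zero _).mpr h2

variable {k}

/-- The universal property: a map on generators into a metabelian Lie algebra extends
uniquely to the free metabelian Lie algebra. -/
noncomputable def lift {X : Type v} {B : Type w} [LieRing B] [LieAlgebra k B]
    (f : X → B) (hB : IsMetabelian B) : FreeMetabelian k X →ₗ⁅k⁆ B :=
  LieMeta.qlift _ (FreeLieAlgebra.lift k f) (by
    intro x hx
    rw [LieHom.mem_ker]
    have h1 : FreeLieAlgebra.lift k f x ∈
        LieIdeal.map (FreeLieAlgebra.lift k f) (derivedSeries k (FreeLieAlgebra k X) 2) :=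
      LieIdeal.mem_map hx
    have h2 := LieIdeal.derivedSeries_map_le (f := FreeLieAlgebra.lift k f) 2
    rw [LieMeta.derivedSeries_two_eq_bot_of_isMetabelian hB] at h2
    simpa using h2 h1)

@[simp]
theorem lift_of {X : Type v} {B : Type w} [LieRing B] [LieAlgebra k B]
    (f : X → B) (hB : IsMetabelian B) (x : X) : lift f hB (of k X x) = f x := by
  show FreeLieAlgebra.lift k f (FreeLieAlgebra.of k x) = f x
  simp

end FreeMetabelian

namespace LieAG

variable (r n : ℕ)

/-- The inclusion of `F_r` into `F_{r+n}` sending `aᵢ` to `aᵢ`. -/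
noncomputable def incl : FreeMetabelian k (Fin r) →ₗ⁅k⁆ FreeMetabelian k (Fin r ⊕ Fin n) :=
  FreeMetabelian.lift (fun i => FreeMetabelian.of k _ (Sum.inl i))
    (FreeMetabelian.isMetabelian k _)

/-- Evaluation at the point `p`: the unique Lie algebra morphism `F_{r+n} → F_r` which is the
identity on the generators of `F_r` and sends the unknown `xⱼ` to `p j`. -/
noncomputable def ev (p : Fin n → FreeMetabelian k (Fin r)) :
    FreeMetabelian k (Fin r ⊕ Fin n) →ₗ⁅k⁆ FreeMetabelian k (Fin r) :=
  FreeMetabelian.lift (Sum.elim (FreeMetabelian.of k _) p) (FreeMetabelian.isMetabelian k _)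

/-- The algebraic set defined by the system of equations `S ⊆ F_{r+n}`. -/
def vSet (S : Set (FreeMetabelian k (Fin r ⊕ Fin n))) :
    Set (Fin n → FreeMetabelian k (Fin r)) :=
  {p | ∀ f ∈ S, ev k r n p f = 0}

/-- A subset of affine `n`-space over `F_r` is algebraic if it is the solution set of some
system of equations. -/
def IsAlgSet (Y : Set (Fin n → FreeMetabelian k (Fin r))) : Prop :=
  ∃ S, Y = vSet k r n S

/-- The radical of a subset `Y` of affine `n`-space, as a Lie ideal of `F_{r+n}`:
all equations vanishing on every point of `Y`. -/
noncomputable def radIdeal (Y : Set (Fin n → FreeMetabelian k (Fin r))) :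
    LieIdeal k (FreeMetabelian k (Fin r ⊕ Fin n)) :=
  ⨅ (p : Fin n → FreeMetabelian k (Fin r)) (_ : p ∈ Y), (ev k r n p).ker

/-- The coordinate algebra `Γ(Y) = F_{r+n} / Rad(Y)`. -/
abbrev Coord (Y : Set (Fin n → FreeMetabelian k (Fin r))) : Type _ :=
  FreeMetabelian k (Fin r ⊕ Fin n) ⧸ radIdeal k r n Y

/-- The canonical morphism `κ_Y : F_r → Γ(Y)`. -/
noncomputable def kappa (Y : Set (Fin n → FreeMetabelian k (Fin r))) :
    FreeMetabelian k (Fin r) →ₗ⁅k⁆ Coord k r n Y :=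
  (LieMeta.mkHom k (radIdeal k r n Y)).comp (incl k r n)

theorem radIdeal_le_ker {Y : Set (Fin n → FreeMetabelian k (Fin r))}
    {p : Fin n → FreeMetabelian k (Fin r)} (hp : p ∈ Y) :
    radIdeal k r n Y ≤ (ev k r n p).ker := by
  exact iInf₂_le p hp

/-- The `F_r`-morphism `Γ(Y) → F_r` induced by evaluation at a point of `Y`. -/
noncomputable def pointHom {Y : Set (Fin n → FreeMetabelian k (Fin r))}
    {p : Fin n → FreeMetabelian k (Fin r)} (hp : p ∈ Y) :
    Coord k r n Y →ₗ⁅k⁆ FreeMetabelian k (Fin r) :=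
  LieMeta.qlift _ (ev k r n p) (radIdeal_le_ker k r n hp)

/-- The point of affine space associated with a morphism `Γ(Y) → F_r`: the images of
the unknowns. -/
noncomputable def pointOf {Y : Set (Fin n → FreeMetabelian k (Fin r))}
    (φ : Coord k r n Y →ₗ⁅k⁆ FreeMetabelian k (Fin r)) :
    Fin n → FreeMetabelian k (Fin r) :=
  fun j => φ (LieMeta.mkHom k (radIdeal k r n Y) (FreeMetabelian.of k _ (Sum.inr j)))

/-- The Zariski topology on affine `n`-space over `F_r`: the algebraic sets form a
subbasis of closed sets. -/
def zariski : TopologicalSpace (Fin n → FreeMetabelian k (Fin r)) :=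
  TopologicalSpace.generateFrom {U | ∃ S, U = (vSet k r n S)ᶜ}

/-- A closed subset (in the Zariski topology) is irreducible if it is nonempty and is not the
union of two proper closed subsets. -/
def IsIrredClosed (Y : Set (Fin n → FreeMetabelian k (Fin r))) : Prop :=
  Y.Nonempty ∧ ∀ Y₁ Y₂ : Set (Fin n → FreeMetabelian k (Fin r)),
    @IsClosed _ (zariski k r n) Y₁ → @IsClosed _ (zariski k r n) Y₂ →
      Y₁ ⊂ Y → Y₂ ⊂ Y → Y ≠ Y₁ ∪ Y₂

/-- `Y` and `Z` are isomorphic algebraic sets: there are mutually inverse morphisms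
(given coordinatewise by Lie polynomials) between them. -/
def AlgIso {n m : ℕ} (Y : Set (Fin n → FreeMetabelian k (Fin r)))
    (Z : Set (Fin m → FreeMetabelian k (Fin r))) : Prop :=
  ∃ (fs : Fin m → FreeMetabelian k (Fin r ⊕ Fin n))
    (gs : Fin n → FreeMetabelian k (Fin r ⊕ Fin m)),
    (∀ p ∈ Y, (fun j => ev k r n p (fs j)) ∈ Z) ∧
    (∀ q ∈ Z, (fun i => ev k r m q (gs i)) ∈ Y) ∧
    (∀ p ∈ Y, (fun i => ev k r m (fun j => ev k r n p (fs j)) (gs i)) = p) ∧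
    (∀ q ∈ Z, (fun j => ev k r n (fun i => ev k r m q (gs i)) (fs j)) = q)

end LieAG

/-- The Fitting radical of a Lie algebra: the set of elements whose generated Lie ideal is
nilpotent. -/
def fittingSet (B : Type w) [LieRing B] [LieAlgebra k B] : Set B :=
  {x | LieRing.IsNilpotent (LieSubmodule.lieSpan k B ({x} : Set B))}


section MyAux
variable {k' : Type*} [Field k'] {B' : Type*} [LieRing B'] [LieAlgebra k' B']

theorem myLie_aux1 {B : Type*} [LieRing B] (hmeta : IsMetabelian B)
    (hPhi2 : ∀ x y : B, ⁅⁅x, y⁆, x⁆ = 0 → ⁅⁅x, y⁆, y⁆ = 0 → ⁅x, y⁆ = 0)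
    (x a b : B) (h : ⁅x, ⁅x, ⁅a, b⁆⁆⁆ = 0) : ⁅x, ⁅a, b⁆⁆ = 0 := by
  set u := ⁅a, b⁆ with hu
  have h1 : ⁅⁅u, x⁆, u⁆ = 0 := hmeta u x a b
  have e1 : ⁅⁅u, x⁆, x⁆ = ⁅x, ⁅x, u⁆⁆ := by
    calc ⁅⁅u, x⁆, x⁆ = -⁅x, ⁅u, x⁆⁆ := (lie_skew _ _).symm
      _ = -⁅x, -⁅x, u⁆⁆ := by rw [show ⁅u, x⁆ = -⁅x, u⁆ from (lie_skew u x).symm]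
      _ = ⁅x, ⁅x, u⁆⁆ := by rw [lie_neg, neg_neg]
  have h2 : ⁅⁅u, x⁆, x⁆ = 0 := by rw [e1, h]
  have h3 : ⁅u, x⁆ = 0 := hPhi2 u x h1 h2
  rw [← lie_skew, h3, neg_zero]

theorem myLie_aux2 {B : Type*} [LieRing B] (hmeta : IsMetabelian B)
    (hPhi2 : ∀ x y : B, ⁅⁅x, y⁆, x⁆ = 0 → ⁅⁅x, y⁆, y⁆ = 0 → ⁅x, y⁆ = 0) :
    ∀ (n : ℕ) (x a b : B), (fun v => ⁅x, v⁆)^[n] ⁅a, b⁆ = 0 → ⁅x, ⁅a, b⁆⁆ = 0 := by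
  intro n
  induction n with
  | zero => intro x a b h; simp only [Function.iterate_zero, id_eq] at h; rw [h, lie_zero]
  | succ n ih =>
    intro x a b h
    rw [Function.iterate_succ_apply] at h
    exact myLie_aux1 hmeta hPhi2 x a b (ih x x ⁅a, b⁆ h)

theorem myLie_key {B : Type*} [LieRing B] (hmeta : IsMetabelian B)
    (hPhi2 : ∀ x y : B, ⁅⁅x, y⁆, x⁆ = 0 → ⁅⁅x, y⁆, y⁆ = 0 → ⁅x, y⁆ = 0)
    (x y : B) (hx : ∃ n, (fun v => ⁅x, v⁆)^[n] ⁅x, y⁆ = 0)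
    (hy : ∃ n, (fun v => ⁅y, v⁆)^[n] ⁅y, x⁆ = 0) : ⁅x, y⁆ = 0 := by
  obtain ⟨n, hn⟩ := hx
  obtain ⟨m, hm⟩ := hy
  have h1 : ⁅x, ⁅x, y⁆⁆ = 0 := myLie_aux2 hmeta hPhi2 n x x y hn
  have h2 : ⁅y, ⁅y, x⁆⁆ = 0 := myLie_aux2 hmeta hPhi2 m y y x hm
  apply hPhi2
  · rw [show ⁅⁅x,y⁆,x⁆ = -⁅x,⁅x,y⁆⁆ from (lie_skew _ _).symm, h1, neg_zero]
  · rw [show ⁅⁅x,y⁆,y⁆ = -⁅⁅y,x⁆,y⁆ by rw [show ⁅x,y⁆ = -⁅y,x⁆ from (lie_skew x y).symm, neg_lie],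
      show ⁅⁅y,x⁆,y⁆ = -⁅y,⁅y,x⁆⁆ from (lie_skew _ _).symm, h2, neg_zero, neg_zero]

theorem myLie_iter_coe {S : Type*} [LieRing S] [LieAlgebra k' S]
    (f : S →ₗ⁅k'⁆ B') (x : S) :
    ∀ (n : ℕ) (z : S), f ((fun v : S => ⁅x, v⁆)^[n] z) = (fun v : B' => ⁅f x, v⁆)^[n] (f z) := by
  intro n
  induction n with
  | zero => intro z; simp
  | succ n ih =>
    intro z
    rw [Function.iterate_succ_apply, Function.iterate_succ_apply, ih ⁅x, z⁆, f.map_lie]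

theorem myLie_exists_iter (S : Type*) [LieRing S] [LieAlgebra k' S]
    [LieRing.IsNilpotent S] (f : S →ₗ⁅k'⁆ B') (x z : S) :
    ∃ n, (fun v : B' => ⁅f x, v⁆)^[n] (f z) = 0 := by
  obtain ⟨n, hn⟩ := LieModule.isNilpotent_toEnd_of_isNilpotent k' S S x
  refine ⟨n, ?_⟩
  rw [← myLie_iter_coe f x n z]
  have : (fun v : S => ⁅x, v⁆)^[n] z = 0 := by
    have h1 : (fun v : S => ⁅x, v⁆) = ⇑(LieModule.toEnd k' S S x) := by
      funext v; simp [LieModule.toEnd_apply_apply]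
    rw [h1, ← Module.End.pow_apply, hn, LinearMap.zero_apply]
  rw [this]
  simp

end MyAux

/-- If `B` is a metabelian Lie algebra satisfying axiom `Φ2`, then every
nilpotent Lie subalgebra of `B` is abelian; in particular any two elements of the Fitting
radical of `B` commute. -/
theorem nilpotent_subalgebras_abelian
    (k : Type u) [Field k] (B : Type v) [LieRing B] [LieAlgebra k B]
    (hmeta : IsMetabelian B)
    (hPhi2 : ∀ x y : B, ⁅⁅x, y⁆, x⁆ = 0 → ⁅⁅x, y⁆, y⁆ = 0 → ⁅x, y⁆ = 0) :
    (∀ C : LieSubalgebra k B, LieRing.IsNilpotent C →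
      ∀ x ∈ C, ∀ y ∈ C, ⁅x, y⁆ = (0 : B)) ∧
    (∀ x ∈ fittingSet k B, ∀ y ∈ fittingSet k B, ⁅x, y⁆ = (0 : B)) := by
  have part1 : ∀ C : LieSubalgebra k B, LieRing.IsNilpotent C →
      ∀ x ∈ C, ∀ y ∈ C, ⁅x, y⁆ = (0 : B) := by
    intro C hC x hx y hy
    haveI := hC
    apply myLie_key hmeta hPhi2
    · obtain ⟨n, hn⟩ := myLie_exists_iter (k' := k) C C.incl ⟨x, hx⟩ ⁅(⟨x, hx⟩ : C), (⟨y, hy⟩ : C)⁆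
      exact ⟨n, by simpa using hn⟩
    · obtain ⟨n, hn⟩ := myLie_exists_iter (k' := k) C C.incl ⟨y, hy⟩ ⁅(⟨y, hy⟩ : C), (⟨x, hx⟩ : C)⁆
      exact ⟨n, by simpa using hn⟩
  refine ⟨part1, ?_⟩
  intro x hx y hy
  apply myLie_key hmeta hPhi2
  · haveI : LieRing.IsNilpotent (LieSubmodule.lieSpan k B ({x} : Set B)) := hx
    have hxI : x ∈ LieSubmodule.lieSpan k B ({x} : Set B) :=
      LieSubmodule.subset_lieSpan rfl
    have hzI : ⁅x, y⁆ ∈ LieSubmodule.lieSpan k B ({x} : Set B) := by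
      have h' : ⁅y, x⁆ ∈ LieSubmodule.lieSpan k B ({x} : Set B) :=
        (LieSubmodule.lieSpan k B ({x} : Set B)).lie_mem hxI
      rw [show ⁅x, y⁆ = -⁅y, x⁆ from (lie_skew x y).symm]
      exact neg_mem h'
    obtain ⟨n, hn⟩ := myLie_exists_iter (k' := k) (LieSubmodule.lieSpan k B ({x} : Set B))
      (LieIdeal.incl _) ⟨x, hxI⟩ ⟨⁅x, y⁆, hzI⟩
    exact ⟨n, by simpa using hn⟩
  · haveI : LieRing.IsNilpotent (LieSubmodule.lieSpan k B ({y} : Set B)) := hy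
    have hyI : y ∈ LieSubmodule.lieSpan k B ({y} : Set B) :=
      LieSubmodule.subset_lieSpan rfl
    have hzI : ⁅y, x⁆ ∈ LieSubmodule.lieSpan k B ({y} : Set B) := by
      have h' : ⁅x, y⁆ ∈ LieSubmodule.lieSpan k B ({y} : Set B) :=
        (LieSubmodule.lieSpan k B ({y} : Set B)).lie_mem hyI
      rw [show ⁅y, x⁆ = -⁅x, y⁆ from (lie_skew y x).symm]
      exact neg_mem h'
    obtain ⟨n, hn⟩ := myLie_exists_iter (k' := k) (LieSubmodule.lieSpan k B ({y} : Set B))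
      (LieIdeal.incl _) ⟨y, hyI⟩ ⟨⁅y, x⁆, hzI⟩
    exact ⟨n, by simpa using hn⟩
end

section
/- Let B be a metabelian Lie algebra over a field k satisfying axioms Φ2 and Φ3. If a ∈ B with a ∉ Fit(B), then for every nonzero b ∈ Fit(B) one has ⁅a,b⁆ ≠ 0. -/
open LieAlgebra

universe u v w

variable (k : Type u) [Field k]

section Aux

variable {k : Type u} [Field k] {B : Type v} [LieRing B] [LieAlgebra k B]

/-- In a metabelian Lie algebra with Φ2, every element of the Fitting radical `u`
satisfies `⁅u, ⁅u, x⁆⁆ = 0` for all `x`. -/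
theorem aux_lie_lie_self_eq_zero
    (hmeta : IsMetabelian B)
    (hPhi2 : ∀ x y : B, ⁅⁅x, y⁆, x⁆ = 0 → ⁅⁅x, y⁆, y⁆ = 0 → ⁅x, y⁆ = 0)
    {u : B} (hu : u ∈ fittingSet k B) (x : B) : ⁅u, ⁅u, x⁆⁆ = 0 := by
  set I := LieSubmodule.lieSpan k B ({u} : Set B) with hI
  have hu' : u ∈ I := LieSubmodule.subset_lieSpan rfl
  have hc : ⁅u, x⁆ ∈ I := by
    rw [← lie_skew]
    exact I.neg_mem (I.lie_mem hu')
  haveI : LieRing.IsNilpotent I := hu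
  obtain ⟨m, hm⟩ := LieAlgebra.nilpotent_ad_of_nilpotent_algebra k (I : Type v)
  -- the iterated bracket sequence
  set g : ℕ → B := fun n => (fun n => Nat.rec ⁅u, x⁆ (fun _ y => ⁅u, y⁆) n) n with hg
  have hg0 : g 0 = ⁅u, x⁆ := rfl
  have hgs : ∀ n, g (n + 1) = ⁅u, g n⁆ := fun n => rfl
  -- each term is a bracket
  have hbr : ∀ n, ∃ p q : B, g n = ⁅p, q⁆ := by
    intro n
    cases n with
    | zero => exact ⟨u, x, rfl⟩
    | succ n => exact ⟨u, g n, rfl⟩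
  -- the sequence eventually vanishes
  have hgm : g m = 0 := by
    set u' : I := ⟨u, hu'⟩ with hu''
    set c' : I := ⟨⁅u, x⁆, hc⟩ with hc''
    have coe_eq : ∀ n, (((LieAlgebra.ad k I u') ^ n) c' : B) = g n := by
      intro n
      induction n with
      | zero => rfl
      | succ n ih =>
        rw [pow_succ']
        have : ((LieAlgebra.ad k I u') (((LieAlgebra.ad k I u') ^ n) c') : B)
            = ⁅u, (((LieAlgebra.ad k I u') ^ n) c' : B)⁆ := rfl
        rw [Module.End.mul_apply, this, ih, hgs]
    have := hm u'
    have h0 : ((LieAlgebra.ad k I u') ^ m) c' = 0 := by rw [this]; rfl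
    rw [← coe_eq m, h0]
    rfl
  -- descending step via Φ2
  have key : ∀ n, g (n + 2) = 0 → g (n + 1) = 0 := by
    intro n hn2
    obtain ⟨p, q, hpq⟩ := hbr n
    have e1 : ⁅g n, u⁆ = -g (n + 1) := by
      rw [hgs n, ← lie_skew]
    have hb1 : ⁅⁅g n, u⁆, g n⁆ = 0 := by
      rw [e1, neg_lie, hpq]
      have : ⁅g (n+1), ⁅p, q⁆⁆ = 0 := by
        rw [hgs n]; exact hmeta u (g n) p q
      rw [this, neg_zero]
    have hb2 : ⁅⁅g n, u⁆, u⁆ = 0 := by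
      rw [e1, neg_lie, ← lie_skew, neg_neg]
      rw [← hgs (n+1)]
      exact hn2
    have := hPhi2 (g n) u hb1 hb2
    rw [this] at e1
    exact neg_eq_zero.mp e1.symm
  have down : ∀ n, g (n + 1) = 0 → g 1 = 0 := by
    intro n
    induction n with
    | zero => exact id
    | succ n ih => intro h; exact ih (key n h)
  have hg1 : g 1 = 0 := by
    cases m with
    | zero => rw [show g 1 = ⁅u, g 0⁆ from rfl, hgm, lie_zero]
    | succ n => exact down n hgm
  exact hg1

end Aux

/-- If `B` is a metabelian Lie algebra satisfying axioms `Φ2` and `Φ3`,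
`a ∉ Fit(B)` and `b ∈ Fit(B)` is nonzero, then `⁅a,b⁆ ≠ 0`. -/
theorem lie_ne_zero_of_not_mem_fitting
    (k : Type u) [Field k] (B : Type v) [LieRing B] [LieAlgebra k B]
    (hmeta : IsMetabelian B)
    (hPhi2 : ∀ x y : B, ⁅⁅x, y⁆, x⁆ = 0 → ⁅⁅x, y⁆, y⁆ = 0 → ⁅x, y⁆ = 0)
    (hPhi3 : ∀ x y z : B, x ≠ 0 → ⁅x, y⁆ = 0 → ⁅x, z⁆ = 0 → ⁅y, z⁆ = 0)
    (a : B) (ha : a ∉ fittingSet k B)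
    (b : B) (hb : b ∈ fittingSet k B) (hb0 : b ≠ 0) :
    ⁅a, b⁆ ≠ 0 := by
  intro hab
  apply ha
  -- Step 1: `a` commutes with the derived subalgebra (on generators).
  have H : ∀ x y : B, ⁅a, ⁅x, y⁆⁆ = 0 := by
    by_cases hcen : ∀ x : B, ⁅b, x⁆ = 0
    · intro x y
      have : ⁅x, y⁆ = 0 := hPhi3 b x y hb0 (hcen x) (hcen y)
      rw [this, lie_zero]
    · push_neg at hcen
      obtain ⟨x0, hx0⟩ := hcen
      have hba : ⁅b, a⁆ = 0 := by rw [← lie_skew, hab, neg_zero]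
      have hbb := aux_lie_lie_self_eq_zero hmeta hPhi2 hb x0
      have haf : ⁅a, ⁅b, x0⁆⁆ = 0 := hPhi3 b a ⁅b, x0⁆ hb0 hba hbb
      intro x y
      refine hPhi3 ⁅b, x0⁆ a ⁅x, y⁆ hx0 ?_ (hmeta b x0 x y)
      rw [← lie_skew, haf, neg_zero]
  -- Step 2: `a` commutes with the whole derived ideal.
  have hspan : (↑(derivedSeries k B 1) : Submodule k B) =
      Submodule.span k {m | ∃ x ∈ (⊤ : LieIdeal k B), ∃ n ∈ (⊤ : LieIdeal k B), ⁅x, n⁆ = m} := by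
    rw [show derivedSeries k B 1 = ⁅(⊤ : LieIdeal k B), (⊤ : LieIdeal k B)⁆ by
      rw [derivedSeries_def, derivedSeriesOfIdeal_succ, derivedSeriesOfIdeal_zero]]
    exact LieSubmodule.lieIdeal_oper_eq_linear_span' ..
  have hDa : ∀ e ∈ derivedSeries k B 1, ⁅a, e⁆ = 0 := by
    intro e he
    have he' : e ∈ Submodule.span k
        {m | ∃ x ∈ (⊤ : LieIdeal k B), ∃ n ∈ (⊤ : LieIdeal k B), ⁅x, n⁆ = m} := by
      rw [← hspan]; exact he
    clear he
    induction he' using Submodule.span_induction with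
    | mem z hz => obtain ⟨x, -, y, -, rfl⟩ := hz; exact H x y
    | zero => exact lie_zero a
    | add u v _ _ hu hv => rw [lie_add, hu, hv, add_zero]
    | smul t u _ hu => rw [lie_smul, hu, smul_zero]
  have hDD : ∀ d ∈ derivedSeries k B 1, ∀ e ∈ derivedSeries k B 1, ⁅d, e⁆ = (0 : B) := by
    intro d hd e he
    have h2 : ⁅d, e⁆ ∈ derivedSeries k B 2 := by
      rw [show derivedSeries k B 2 = ⁅derivedSeries k B 1, derivedSeries k B 1⁆ by
        rw [derivedSeries_def, derivedSeriesOfIdeal_succ]]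
      exact LieSubmodule.lie_mem_lie hd he
    rw [LieMeta.derivedSeries_two_eq_bot_of_isMetabelian hmeta] at h2
    simpa using h2
  have hmemD : ∀ x : B, ⁅x, a⁆ ∈ derivedSeries k B 1 := by
    intro x
    rw [show derivedSeries k B 1 = ⁅(⊤ : LieIdeal k B), (⊤ : LieIdeal k B)⁆ by
      rw [derivedSeries_def, derivedSeriesOfIdeal_succ, derivedSeriesOfIdeal_zero]]
    exact LieSubmodule.lie_mem_lie trivial trivial
  -- Step 3: the ideal generated by `a` is contained in `span{a} + [B,B]` and is abelian.
  let P : LieSubmodule k B B :=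
    { (Submodule.span k ({a} : Set B) ⊔ (derivedSeries k B 1 : Submodule k B)) with
      lie_mem := by
        intro x m hm
        rcases Submodule.mem_sup.mp hm with ⟨p, hp, q, hq, rfl⟩
        obtain ⟨s, rfl⟩ := Submodule.mem_span_singleton.mp hp
        have : ⁅x, s • a + q⁆ = s • ⁅x, a⁆ + ⁅x, q⁆ := by
          rw [lie_add, lie_smul]
        rw [this]
        refine Submodule.mem_sup_right ?_
        exact Submodule.add_mem _
          (Submodule.smul_mem _ s (hmemD x)) ((derivedSeries k B 1).lie_mem hq) }
  have hIP : LieSubmodule.lieSpan k B ({a} : Set B) ≤ P := by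
    rw [LieSubmodule.lieSpan_le]
    intro z hz
    rw [Set.mem_singleton_iff] at hz
    rw [hz]
    exact Submodule.mem_sup_left (Submodule.mem_span_singleton_self a)
  have habel : ∀ u v : B, u ∈ P → v ∈ P → ⁅u, v⁆ = 0 := by
    intro u v hu hv
    rcases Submodule.mem_sup.mp hu with ⟨p, hp, d, hd, rfl⟩
    rcases Submodule.mem_sup.mp hv with ⟨q, hq, e, he, rfl⟩
    obtain ⟨s, rfl⟩ := Submodule.mem_span_singleton.mp hp
    obtain ⟨t, rfl⟩ := Submodule.mem_span_singleton.mp hq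
    have h1 : ⁅a, e⁆ = 0 := hDa e he
    have h2 : ⁅d, a⁆ = 0 := by rw [← lie_skew, hDa d hd, neg_zero]
    have h3 : ⁅d, e⁆ = 0 := hDD d hd e he
    simp [add_lie, lie_add, smul_lie, lie_smul, h1, h2, h3]
  show LieRing.IsNilpotent (LieSubmodule.lieSpan k B ({a} : Set B))
  haveI : LieModule.IsTrivial (LieSubmodule.lieSpan k B ({a} : Set B))
      (LieSubmodule.lieSpan k B ({a} : Set B)) := by
    constructor
    intro x m
    have : (⁅x, m⁆ : B) = 0 := habel x m (hIP x.2) (hIP m.2)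
    exact Subtype.ext this
  infer_instance
end

section
/- Let B be a metabelian Lie algebra over a field k satisfying axioms Φ2 and Φ3. Then for every x ∈ B: x ∈ Fit(B) if and only if ⁅⁅x,y⁆,x⁆ = 0 for all y ∈ B. If moreover B is an F_r-algebra with designated embedding ι : F_r → B, then x ∈ Fit(B) if and only if ⁅⁅x,ι(a_i)⁆,x⁆ = 0 for all i = 1,…,r. -/
open LieAlgebra

universe u v w

variable (k : Type u) [Field k]

section Statement10Aux

/-! ### A 2-dimensional nonabelian metabelian Lie algebra -/

/-- A 2-dimensional nonabelian metabelian Lie algebra over `k`. -/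
@[ext] structure Aff2 (k : Type u) where
  a : k
  b : k

namespace Aff2
variable {k : Type u} [Field k]

instance : Add (Aff2 k) := ⟨fun x y => ⟨x.a + y.a, x.b + y.b⟩⟩
instance : Zero (Aff2 k) := ⟨⟨0, 0⟩⟩
instance : Neg (Aff2 k) := ⟨fun x => ⟨-x.a, -x.b⟩⟩
instance : SMul k (Aff2 k) := ⟨fun t x => ⟨t * x.a, t * x.b⟩⟩

@[simp] theorem add_a (x y : Aff2 k) : (x + y).a = x.a + y.a := rfl
@[simp] theorem add_b (x y : Aff2 k) : (x + y).b = x.b + y.b := rfl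
@[simp] theorem zero_a : (0 : Aff2 k).a = 0 := rfl
@[simp] theorem zero_b : (0 : Aff2 k).b = 0 := rfl
@[simp] theorem neg_a (x : Aff2 k) : (-x).a = -x.a := rfl
@[simp] theorem neg_b (x : Aff2 k) : (-x).b = -x.b := rfl
@[simp] theorem smul_a (t : k) (x : Aff2 k) : (t • x).a = t * x.a := rfl
@[simp] theorem smul_b (t : k) (x : Aff2 k) : (t • x).b = t * x.b := rfl

instance : AddCommGroup (Aff2 k) where
  add_assoc x y z := by ext <;> simp <;> ring
  zero_add x := by ext <;> simp
  add_zero x := by ext <;> simp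
  add_comm x y := by ext <;> simp <;> ring
  neg_add_cancel x := by ext <;> simp
  nsmul := nsmulRec
  zsmul := zsmulRec

instance : Module k (Aff2 k) where
  one_smul x := by ext <;> simp
  mul_smul t s x := by ext <;> simp <;> ring
  smul_zero t := by ext <;> simp
  smul_add t x y := by ext <;> simp <;> ring
  add_smul t s x := by ext <;> simp <;> ring
  zero_smul x := by ext <;> simp

instance : LieRing (Aff2 k) where
  bracket x y := ⟨0, x.a * y.b - y.a * x.b⟩
  add_lie x y z := by ext <;> simp <;> ring
  lie_add x y z := by ext <;> simp <;> ring
  lie_self x := by ext <;> simp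
  leibniz_lie x y z := by ext <;> simp <;> ring

@[simp] theorem lie_a (x y : Aff2 k) : (⁅x, y⁆ : Aff2 k).a = 0 := rfl
@[simp] theorem lie_b (x y : Aff2 k) : (⁅x, y⁆ : Aff2 k).b = x.a * y.b - y.a * x.b := rfl

@[simp] theorem sub_a (x y : Aff2 k) : (x - y).a = x.a - y.a := by
  rw [sub_eq_add_neg, sub_eq_add_neg]; simp
@[simp] theorem sub_b (x y : Aff2 k) : (x - y).b = x.b - y.b := by
  rw [sub_eq_add_neg, sub_eq_add_neg]; simp

instance : LieAlgebra k (Aff2 k) where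
  lie_smul t x y := by ext <;> simp <;> ring

theorem isMetabelian' : IsMetabelian (Aff2 k) := by
  intro x y z w
  ext <;> simp <;> ring

theorem ef_ne_zero : (⁅(⟨1, 0⟩ : Aff2 k), (⟨0, 1⟩ : Aff2 k)⁆ : Aff2 k) ≠ 0 := by
  intro h
  have h2 := congrArg Aff2.b h
  simp at h2

end Aff2

/-- In the free metabelian Lie algebra of rank `≥ 2`, distinct generators do not commute. -/
theorem FreeMetabelian.of_bracket_ne_zero (k : Type u) [Field k] (r : ℕ) (hr : 2 ≤ r) :
    ⁅FreeMetabelian.of k (Fin r) ⟨0, by omega⟩, FreeMetabelian.of k (Fin r) ⟨1, by omega⟩⁆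
      ≠ (0 : FreeMetabelian k (Fin r)) := by
  intro h
  set f : Fin r → Aff2 k := fun i =>
    if (i : ℕ) = 0 then ⟨1, 0⟩ else if (i : ℕ) = 1 then ⟨0, 1⟩ else 0 with hf
  have hmap := congrArg (FreeMetabelian.lift f Aff2.isMetabelian') h
  rw [LieHom.map_lie, FreeMetabelian.lift_of, FreeMetabelian.lift_of] at hmap
  replace hmap := hmap.trans (map_zero (FreeMetabelian.lift f Aff2.isMetabelian'))
  simp only [hf] at hmap
  norm_num at hmap
  exact Aff2.ef_ne_zero hmap

section MainLemmas

variable {k : Type u} [Field k] {B : Type v} [LieRing B] [LieAlgebra k B]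

/-- The linear span of all brackets. -/
private def derSpan (k : Type u) [Field k] (B : Type v) [LieRing B] [LieAlgebra k B] :
    Submodule k B :=
  Submodule.span k {m : B | ∃ a b : B, ⁅a, b⁆ = m}

private theorem bracket_mem_derSpan (a b : B) : ⁅a, b⁆ ∈ derSpan k B :=
  Submodule.subset_span ⟨a, b, rfl⟩

private theorem lie_mem_derSpan (z : B) {u : B} (hu : u ∈ derSpan k B) :
    ⁅z, u⁆ ∈ derSpan k B := by
  induction hu using Submodule.span_induction with
  | mem w hw => obtain ⟨a, b, rfl⟩ := hw; exact bracket_mem_derSpan z ⁅a, b⁆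
  | zero => rw [lie_zero]; exact Submodule.zero_mem _
  | add u v _ _ hu hv => rw [lie_add]; exact Submodule.add_mem _ hu hv
  | smul t u _ hu => rw [lie_smul]; exact Submodule.smul_mem _ t hu

private theorem derSpan_bracket_zero (hmeta : IsMetabelian B) {u v : B}
    (hu : u ∈ derSpan k B) (hv : v ∈ derSpan k B) : ⁅u, v⁆ = 0 := by
  induction hu using Submodule.span_induction with
  | mem w hw =>
    obtain ⟨a, b, rfl⟩ := hw
    induction hv using Submodule.span_induction with
    | mem w' hw' => obtain ⟨c, d, rfl⟩ := hw'; exact hmeta a b c d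
    | zero => exact lie_zero _
    | add u' v' _ _ hu' hv' => rw [lie_add, hu', hv', add_zero]
    | smul t u' _ hu' => rw [lie_smul, hu', smul_zero]
  | zero => exact zero_lie _
  | add u' v' _ _ hu' hv' => rw [add_lie, hu' , hv', add_zero]
  | smul t u' _ hu' => rw [smul_lie, hu', smul_zero]

/-- If `ad(x)² = 0` then `x` lies in the Fitting radical (given `Φ3` and metabelianity). -/
private theorem mem_fitting_of_sq (hmeta : IsMetabelian B)
    (hPhi3 : ∀ x y z : B, x ≠ 0 → ⁅x, y⁆ = 0 → ⁅x, z⁆ = 0 → ⁅y, z⁆ = 0)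
    (x : B) (hx : ∀ y : B, ⁅⁅x, y⁆, x⁆ = 0) : x ∈ fittingSet k B := by
  have hx' : ∀ y : B, ⁅x, ⁅x, y⁆⁆ = 0 := by
    intro y
    have h1 : ⁅⁅x, y⁆, x⁆ = 0 := hx y
    rw [← lie_skew, h1, neg_zero]
  -- the centralizer of `x`
  set C : Submodule k B := LinearMap.ker (LieAlgebra.ad k B x) with hC
  have hmemC : ∀ u : B, u ∈ C ↔ ⁅x, u⁆ = 0 := by
    intro u; rw [hC, LinearMap.mem_ker, LieAlgebra.ad_apply]
  -- the ideal `k·x + (derSpan ∩ C)`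
  set D : LieSubmodule k B B :=
    { toSubmodule := Submodule.span k {x} ⊔ (derSpan k B ⊓ C)
      lie_mem := by
        intro z a ha
        rcases Submodule.mem_sup.mp ha with ⟨p, hp, q, hq, rfl⟩
        rcases Submodule.mem_span_singleton.mp hp with ⟨c, rfl⟩
        rw [lie_add, lie_smul]
        refine Submodule.add_mem _ (Submodule.smul_mem _ c ?_) ?_
        · refine Submodule.mem_sup_right (Submodule.mem_inf.mpr ⟨bracket_mem_derSpan z x, ?_⟩)
          rw [hmemC]
          have : ⁅z, x⁆ = -⁅x, z⁆ := (lie_skew z x).symm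
          rw [this, lie_neg, hx' z, neg_zero]
        · rcases Submodule.mem_inf.mp hq with ⟨hq1, hq2⟩
          refine Submodule.mem_sup_right (Submodule.mem_inf.mpr ⟨lie_mem_derSpan z hq1, ?_⟩)
          rw [hmemC]
          rw [leibniz_lie x z q, (hmemC q).mp hq2, lie_zero, add_zero]
          exact derSpan_bracket_zero hmeta (bracket_mem_derSpan x z) hq1 } with hD
  have hxD : x ∈ D := Submodule.mem_sup_left (Submodule.mem_span_singleton_self x)
  have hspan : LieSubmodule.lieSpan k B ({x} : Set B) ≤ D :=
    LieSubmodule.lieSpan_le.mpr (Set.singleton_subset_iff.mpr hxD)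
  -- every pair of elements of `D` commutes
  have habel : ∀ u v : B, u ∈ D → v ∈ D → ⁅u, v⁆ = 0 := by
    intro u v hu hv
    rcases eq_or_ne x 0 with rfl | hx0
    · -- then `D = derSpan ∩ C` up to span of 0
      have hsub : ∀ w : B, w ∈ D → w ∈ derSpan k B := by
        intro w hw
        rcases Submodule.mem_sup.mp hw with ⟨p, hp, q, hq, rfl⟩
        rcases Submodule.mem_span_singleton.mp hp with ⟨c, rfl⟩
        rw [smul_zero, zero_add]
        exact (Submodule.mem_inf.mp hq).1
      exact derSpan_bracket_zero hmeta (hsub u hu) (hsub v hv)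
    · have hcent : ∀ w : B, w ∈ D → ⁅x, w⁆ = 0 := by
        intro w hw
        rcases Submodule.mem_sup.mp hw with ⟨p, hp, q, hq, rfl⟩
        rcases Submodule.mem_span_singleton.mp hp with ⟨c, rfl⟩
        rw [lie_add, lie_smul, lie_self, smul_zero, zero_add]
        exact (hmemC q).mp (Submodule.mem_inf.mp hq).2
      exact hPhi3 x u v hx0 (hcent u hu) (hcent v hv)
  -- hence the ideal generated by `x` is abelian, so nilpotent
  haveI : LieModule.IsTrivial (LieSubmodule.lieSpan k B ({x} : Set B))
      (LieSubmodule.lieSpan k B ({x} : Set B)) := by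
    constructor
    intro u m
    apply Subtype.ext
    exact habel u m (hspan u.2) (hspan m.2)
  exact LieModule.trivialIsNilpotent _ _

/-- If `x` lies in the Fitting radical then `ad(x)² = 0` (given `Φ2` and metabelianity). -/
private theorem sq_of_mem_fitting (hmeta : IsMetabelian B)
    (hPhi2 : ∀ x y : B, ⁅⁅x, y⁆, x⁆ = 0 → ⁅⁅x, y⁆, y⁆ = 0 → ⁅x, y⁆ = 0)
    (x : B) (hx : x ∈ fittingSet k B) : ∀ y : B, ⁅⁅x, y⁆, x⁆ = 0 := by
  set I := LieSubmodule.lieSpan k B ({x} : Set B) with hI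
  obtain ⟨N, hN⟩ := (LieModule.isNilpotent_iff k I I).mp (hx : LieRing.IsNilpotent I)
  set adx : B → B := fun z => ⁅x, z⁆ with hadx
  have hxI : x ∈ I := LieSubmodule.subset_lieSpan rfl
  set xI : I := ⟨x, hxI⟩ with hxIdef
  -- iterated brackets stay in the lower central series
  have hiterI : ∀ (m : ℕ) (w : I),
      (fun u : I => ⁅xI, u⁆)^[m] w ∈ LieModule.lowerCentralSeries k I I m := by
    intro m
    induction m with
    | zero => intro w; rw [LieModule.lowerCentralSeries_zero]; trivial
    | succ m ih =>
      intro w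
      rw [Function.iterate_succ_apply']
      rw [LieModule.lowerCentralSeries_succ]
      exact LieSubmodule.lie_mem_lie (LieSubmodule.mem_top xI) (ih w)
  have hcoe : ∀ (m : ℕ) (w : I), (((fun u : I => ⁅xI, u⁆)^[m] w : I) : B) = adx^[m] (w : B) := by
    intro m
    induction m with
    | zero => intro w; rfl
    | succ m ih =>
      intro w
      rw [Function.iterate_succ_apply', Function.iterate_succ_apply', ← ih w]
      rfl
  have hiter : ∀ y : B, adx^[N] ⁅x, y⁆ = 0 := by
    intro y
    have hmem : ⁅x, y⁆ ∈ I := by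
      have h1 : ⁅y, x⁆ ∈ I := I.lie_mem hxI
      have h2 : ⁅x, y⁆ = -⁅y, x⁆ := (lie_skew x y).symm
      rw [h2]; exact Submodule.neg_mem _ h1
    have h3 := hiterI N ⟨⁅x, y⁆, hmem⟩
    rw [hN, LieSubmodule.mem_bot] at h3
    rw [← hcoe N ⟨⁅x, y⁆, hmem⟩, h3]
    rfl
  -- derSpan facts about iterates
  have hSiter : ∀ (m : ℕ) (y : B), adx^[m] ⁅x, y⁆ ∈ derSpan k B := by
    intro m y
    induction m with
    | zero => exact bracket_mem_derSpan x y
    | succ m ih => rw [Function.iterate_succ_apply']; exact lie_mem_derSpan x ih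
  -- downward induction via Φ2
  have hdown : ∀ m : ℕ, (∀ y : B, adx^[m + 1] ⁅x, y⁆ = 0) → ∀ y : B, adx^[1] ⁅x, y⁆ = 0 := by
    intro m
    induction m with
    | zero => exact fun h => h
    | succ m ih =>
      intro h2
      apply ih
      intro y
      set c : B := adx^[m] ⁅x, y⁆ with hc
      have hcS : c ∈ derSpan k B := hSiter m y
      have h1 : ⁅⁅x, c⁆, x⁆ = 0 := by
        have e1 : ⁅x, ⁅x, c⁆⁆ = adx^[m + 2] ⁅x, y⁆ := by
          rw [Function.iterate_succ_apply', Function.iterate_succ_apply']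
        have e2 : ⁅x, ⁅x, c⁆⁆ = 0 := by rw [e1]; exact h2 y
        rw [← lie_skew, e2, neg_zero]
      have h2' : ⁅⁅x, c⁆, c⁆ = 0 :=
        derSpan_bracket_zero hmeta (lie_mem_derSpan x hcS) hcS
      have h3 : ⁅x, c⁆ = 0 := hPhi2 x c h1 h2'
      rw [Function.iterate_succ_apply']
      exact h3
  intro y
  rcases Nat.eq_zero_or_pos N with rfl | hNpos
  · have h0 : ⁅x, y⁆ = 0 := hiter y
    rw [h0, zero_lie]
  · obtain ⟨m, rfl⟩ : ∃ m, N = m + 1 := ⟨N - 1, by omega⟩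
    have h1 : adx^[1] ⁅x, y⁆ = 0 := hdown m hiter y
    have h2 : ⁅x, ⁅x, y⁆⁆ = 0 := h1
    rw [← lie_skew, h2, neg_zero]

end MainLemmas

end Statement10Aux

/-- If `B` is a metabelian Lie algebra satisfying axioms `Φ2` and `Φ3`,
then `x ∈ Fit(B)` iff `⁅⁅x,y⁆,x⁆ = 0` for all `y`; if moreover `B` is an `F_r`-algebra with
designated embedding `ι`, then `x ∈ Fit(B)` iff `⁅⁅x,ι(aᵢ)⁆,x⁆ = 0` for `i = 1,…,r`. -/
theorem mem_fitting_iff_formula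
    (k : Type u) [Field k] (B : Type v) [LieRing B] [LieAlgebra k B]
    (hmeta : IsMetabelian B)
    (hPhi2 : ∀ x y : B, ⁅⁅x, y⁆, x⁆ = 0 → ⁅⁅x, y⁆, y⁆ = 0 → ⁅x, y⁆ = 0)
    (hPhi3 : ∀ x y z : B, x ≠ 0 → ⁅x, y⁆ = 0 → ⁅x, z⁆ = 0 → ⁅y, z⁆ = 0) :
    (∀ x : B, x ∈ fittingSet k B ↔ ∀ y : B, ⁅⁅x, y⁆, x⁆ = 0) ∧
    (∀ (r : ℕ), 2 ≤ r → ∀ ι : FreeMetabelian k (Fin r) →ₗ⁅k⁆ B, Function.Injective ι →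
      ∀ x : B, x ∈ fittingSet k B ↔
        ∀ i : Fin r, ⁅⁅x, ι (FreeMetabelian.of k (Fin r) i)⁆, x⁆ = 0) := by
  have part1 : ∀ x : B, x ∈ fittingSet k B ↔ ∀ y : B, ⁅⁅x, y⁆, x⁆ = 0 :=
    fun x => ⟨sq_of_mem_fitting hmeta hPhi2 x, mem_fitting_of_sq hmeta hPhi3 x⟩
  refine ⟨part1, ?_⟩
  intro r hr ι hι x
  rw [part1 x]
  constructor
  · intro h i
    exact h _
  · intro h y
    rcases eq_or_ne x 0 with rfl | hx0
    · rw [lie_zero]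
    by_cases hall : ∀ i : Fin r, ⁅x, ι (FreeMetabelian.of k (Fin r) i)⁆ = 0
    · exfalso
      have hc : ⁅ι (FreeMetabelian.of k (Fin r) ⟨0, by omega⟩),
          ι (FreeMetabelian.of k (Fin r) ⟨1, by omega⟩)⁆ = 0 :=
        hPhi3 x _ _ hx0 (hall _) (hall _)
      rw [← LieHom.map_lie] at hc
      have hz : ⁅FreeMetabelian.of k (Fin r) ⟨0, by omega⟩,
          FreeMetabelian.of k (Fin r) ⟨1, by omega⟩⁆ = (0 : FreeMetabelian k (Fin r)) := by
        apply hι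
        rw [hc]; exact (map_zero ι).symm
      exact FreeMetabelian.of_bracket_ne_zero k r hr hz
    · push_neg at hall
      obtain ⟨i, hi⟩ := hall
      have hgx : ⁅⁅x, ι (FreeMetabelian.of k (Fin r) i)⁆, x⁆ = 0 := h i
      have hb1 : ⁅⁅x, ι (FreeMetabelian.of k (Fin r) i)⁆, ⁅x, y⁆⁆ = 0 :=
        hmeta x (ι (FreeMetabelian.of k (Fin r) i)) x y
      have hxx : ⁅x, ⁅x, y⁆⁆ = 0 :=
        hPhi3 ⁅x, ι (FreeMetabelian.of k (Fin r) i)⁆ x ⁅x, y⁆ hi hgx hb1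
      rw [← lie_skew, hxx, neg_zero]
end

section
/- Let B be a metabelian F_r-algebra (with designated embedding ι : F_r → B) satisfying axioms Φ2 and Φ3, and let c₁,…,cₙ ∈ F_r with n ≤ r be linearly independent modulo Fit(F_r) = F_r². Then ι(c₁),…,ι(cₙ) are linearly independent modulo Fit(B). -/
open LieAlgebra

universe u v w

variable (k : Type u) [Field k]

/-- Fitting set membership pulls back along injective Lie homs. -/
theorem fitting_mem_of_injective {k : Type u} [Field k]
    {L : Type v} {B : Type w} [LieRing L] [LieAlgebra k L] [LieRing B] [LieAlgebra k B]
    (ι : L →ₗ⁅k⁆ B) (hι : Function.Injective ι) (u : L)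
    (h : LieRing.IsNilpotent (LieSubmodule.lieSpan k B ({ι u} : Set B))) :
    LieRing.IsNilpotent (LieSubmodule.lieSpan k L ({u} : Set L)) := by
  set J : LieIdeal k B := LieSubmodule.lieSpan k B ({ι u} : Set B)
  set I : LieIdeal k L := LieSubmodule.lieSpan k L ({u} : Set L)
  have hIJ : I ≤ LieIdeal.comap ι J := by
    apply LieSubmodule.lieSpan_le.mpr
    intro x hx
    rw [Set.mem_singleton_iff] at hx
    subst hx
    exact LieIdeal.mem_comap.mpr (LieSubmodule.subset_lieSpan rfl)
  have hmem : ∀ x : I, ι (x : L) ∈ J := fun x => hIJ x.2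
  let f : I →ₗ⁅k⁆ J :=
    { toFun := fun x => ⟨ι (x : L), hmem x⟩
      map_add' := fun x y => by ext; simp
      map_smul' := fun t x => by ext; simp
      map_lie' := fun {x y} => by ext; simp [LieSubmodule.coe_bracket] }
  have hf : Function.Injective f := by
    intro x y hxy
    have : ι (x : L) = ι (y : L) := congrArg Subtype.val hxy
    exact Subtype.ext (hι this)
  haveI : LieRing.IsNilpotent J := h
  exact hf.lieAlgebra_isNilpotent

/-- Let `B` be a metabelian `F_r`-algebra satisfying axioms `Φ2` and `Φ3`
and let `c₁,…,cₙ ∈ F_r` (`n ≤ r`) be linearly independent modulo `Fit(F_r)`.  Then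
`ι(c₁),…,ι(cₙ)` are linearly independent modulo `Fit(B)`. -/
theorem linIndep_mod_fitting_of_linIndep
    (k : Type u) [Field k] (r : ℕ) (hr : 2 ≤ r)
    (B : Type v) [LieRing B] [LieAlgebra k B]
    (hmeta : IsMetabelian B)
    (hPhi2 : ∀ x y : B, ⁅⁅x, y⁆, x⁆ = 0 → ⁅⁅x, y⁆, y⁆ = 0 → ⁅x, y⁆ = 0)
    (hPhi3 : ∀ x y z : B, x ≠ 0 → ⁅x, y⁆ = 0 → ⁅x, z⁆ = 0 → ⁅y, z⁆ = 0)
    (ι : FreeMetabelian k (Fin r) →ₗ⁅k⁆ B) (hι : Function.Injective ι)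
    (n : ℕ) (hn : n ≤ r) (c : Fin n → FreeMetabelian k (Fin r))
    (hc : ∀ α : Fin n → k,
      (∑ i, α i • c i) ∈ fittingSet k (FreeMetabelian k (Fin r)) → α = 0) :
    ∀ α : Fin n → k, (∑ i, α i • ι (c i)) ∈ fittingSet k B → α = 0 := by
  intro α hα
  apply hc α
  have heq : ι (∑ i, α i • c i) = ∑ i, α i • ι (c i) := by
    have h1 := map_sum (ι : FreeMetabelian k (Fin r) →ₗ[k] B) (fun i => α i • c i) Finset.univ
    simp only [LieHom.coe_toLinearMap, map_smul] at h1
    exact h1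
  exact fitting_mem_of_injective ι hι _ (by rw [heq]; exact hα)
end
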